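/- Let G be a finite connected graph of diameter 2 and e an edge of G such that G − e is connected. Then gp(G) − 1 ≤ gp(G − e) ≤ gp(G) + 1. -/

import Mathlib

open SimpleGraph

/-- `S` is a *general position set* of `G`: no three distinct vertices of `S`
lie on a common shortest path (geodesic) of `G`. -/
def IsGPSet {V : Type*} (G : SimpleGraph V) (S : Set V) : Prop :=
  ∀ ⦃u v w : V⦄, u ∈ S → v ∈ S → w ∈ S → u ≠ v → u ≠ w → v ≠ w →
    ∀ p : G.Walk u v, p.IsPath → p.length = G.dist u v → w ∉ p.support

/-- The *general position number* of `G`: the maximum cardinality of a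
general position set. -/
noncomputable def gpNum {V : Type*} [Fintype V] (G : SimpleGraph V) : ℕ :=
  sSup {n : ℕ | ∃ S : Finset V, IsGPSet G ↑S ∧ S.card = n}

/-- The vertex-deleted subgraph `G - x`, induced on `V(G) \ {x}`. -/
def delVert {V : Type*} (G : SimpleGraph V) (x : V) : SimpleGraph {y : V // y ≠ x} :=
  G.comap Subtype.val

/-- Distances only grow when deleting edges (for still-reachable pairs). -/
lemma dist_le_dist_deleteEdges {V : Type*} (G : SimpleGraph V) (s : Set (Sym2 V))
    {a b : V} (h : (G.deleteEdges s).Reachable a b) :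
    G.dist a b ≤ (G.deleteEdges s).dist a b := by
  obtain ⟨p, hp⟩ := h.exists_walk_length_eq_dist
  calc G.dist a b ≤ (p.transfer G
        (fun e he => (edgeSet_subset_edgeSet.mpr (deleteEdges_le s))
          (p.edges_subset_edgeSet he))).length := dist_le _
    _ = p.length := p.length_transfer _
    _ = _ := hp

section Main

variable {V : Type*} [Fintype V] [DecidableEq V] (G : SimpleGraph V)

/-- From a gp set of `G` to a gp set of `G - uv`. -/
lemma gp_to_del (hG : G.Connected) (hdiam : G.diam = 2) (u v : V) (huv : G.Adj u v)
    (hconn : (G.deleteEdges {s(u, v)}).Connected) (S : Finset V) (hS : IsGPSet G ↑S) :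
    IsGPSet (G.deleteEdges {s(u, v)}) ↑(if u ∈ S then S.erase u else S.erase v) := by
  set H := G.deleteEdges {s(u, v)} with hH
  set S' : Finset V := if u ∈ S then S.erase u else S.erase v with hS'
  have hsub : S' ⊆ S := by
    rw [hS']; split_ifs <;> exact Finset.erase_subset _ _
  have hu' : u ∉ S' := by
    rw [hS']; split_ifs with h
    · exact Finset.notMem_erase _ _
    · exact fun hc => h (Finset.erase_subset _ _ hc)
  intro a b c ha hb hc hab hac hbc p hp hlen
  replace ha : a ∈ S' := ha
  replace hb : b ∈ S' := hb
  replace hc : c ∈ S' := hc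
  intro hcsupp
  have hd2 : G.dist a b ≤ 2 := by
    rw [← hdiam]; exact dist_le_diam (ediam_ne_top_of_diam_ne_zero (by omega))
  have hd1 : 0 < G.dist a b := hG.pos_dist_of_ne hab
  have hle : G.dist a b ≤ H.dist a b :=
    dist_le_dist_deleteEdges G _ (hconn.preconnected a b)
  rcases eq_or_lt_of_le hle with heq | hlt
  · -- distances agree: transfer the geodesic to G
    have hqe : ∀ e ∈ p.edges, e ∈ G.edgeSet :=
      fun e he => (edgeSet_subset_edgeSet.mpr (deleteEdges_le _)) (p.edges_subset_edgeSet he)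
    have := hS (Finset.mem_coe.mpr (hsub ha)) (Finset.mem_coe.mpr (hsub hb))
      (Finset.mem_coe.mpr (hsub hc)) hab hac hbc (p.transfer G hqe) (hp.transfer hqe)
      (by rw [p.length_transfer, hlen, heq])
    rw [p.support_transfer] at this
    exact this hcsupp
  · -- distance strictly increased
    interval_cases hd : G.dist a b
    · -- G.dist a b = 1
      have hadj : G.Adj a b := dist_eq_one_iff_adj.mp hd
      have hHadj : ¬ H.Adj a b := fun h => by
        have := dist_eq_one_iff_adj.mpr h; omega
      have : s(a, b) = s(u, v) := by
        by_contra hne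
        exact hHadj (deleteEdges_adj.mpr ⟨hadj, by simpa using hne⟩)
      rw [Sym2.eq_iff] at this
      rcases this with ⟨rfl, rfl⟩ | ⟨rfl, rfl⟩
      · exact hu' ha
      · exact hu' hb
    · -- G.dist a b = 2
      obtain ⟨w, hw⟩ := exists_walk_of_dist_ne_zero (G := G) (u := a) (v := b) (by omega)
      cases w with
      | nil => exact hab rfl
      | cons h1 w1 =>
        cases w1 with
        | nil => simp [hd] at hw
        | cons h2 w2 =>
          cases w2 with
          | cons h3 w3 => simp only [Walk.length_cons] at hw; omega
          | nil =>
            rename_i x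
            -- h1 : G.Adj a x, h2 : G.Adj x b
            have hkey : s(a, x) = s(u, v) ∨ s(x, b) = s(u, v) := by
              by_contra hne
              push_neg at hne
              have := dist_le (Walk.cons (deleteEdges_adj.mpr ⟨h1, by simpa using hne.1⟩)
                  (Walk.cons (deleteEdges_adj.mpr ⟨h2, by simpa using hne.2⟩)
                    (Walk.nil : H.Walk b b)))
              simp only [Walk.length_cons, Walk.length_nil] at this
              rw [← hH] at this
              omega
            -- in all surviving cases the middle vertex is u with u ∈ S
            have hxu : x = u := by
              rcases hkey with h | h <;> rw [Sym2.eq_iff] at h <;>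
                rcases h with ⟨h1', h2'⟩ | ⟨h1', h2'⟩
              · exact absurd (h1' ▸ ha) hu'
              · exact h2'
              · exact h1'
              · exact absurd (h2' ▸ hb) hu'
            have ha1 : G.Adj a u := hxu ▸ h1
            have ha2 : G.Adj u b := hxu ▸ h2
            rw [hxu] at hkey
            have huS : u ∈ S := by
              by_contra huS
              rw [hS', if_neg huS] at ha hb
              rcases hkey with h | h <;> rw [Sym2.eq_iff] at h <;>
                rcases h with ⟨h1', h2'⟩ | ⟨h1', h2'⟩
              · exact huS (Finset.erase_subset _ _ (h1' ▸ ha))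
              · exact absurd (h1' ▸ ha) (Finset.notMem_erase _ _)
              · exact absurd (h2' ▸ hb) (Finset.notMem_erase _ _)
              · exact huS (Finset.erase_subset _ _ (h2' ▸ hb))
            have hq : (Walk.cons ha1 (Walk.cons ha2 Walk.nil) : G.Walk a b).IsPath :=
              Walk.isPath_of_length_eq_dist _ (by simp [hd])
            have := hS (Finset.mem_coe.mpr (hsub ha)) (Finset.mem_coe.mpr (hsub hb))
              (Finset.mem_coe.mpr huS) hab (fun h => hu' (h ▸ ha)) (fun h => hu' (h ▸ hb))
              (Walk.cons ha1 (Walk.cons ha2 Walk.nil)) hq (by simp [hd])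
            simp at this

/-- From a gp set of `G - uv` to a gp set of `G`. -/
lemma gp_of_del (hG : G.Connected) (hdiam : G.diam = 2) (u v : V) (huv : G.Adj u v)
    (hconn : (G.deleteEdges {s(u, v)}).Connected) (S : Finset V)
    (hS : IsGPSet (G.deleteEdges {s(u, v)}) ↑S) :
    IsGPSet G ↑(if u ∈ S then S.erase u else S.erase v) := by
  set H := G.deleteEdges {s(u, v)} with hH
  set S' : Finset V := if u ∈ S then S.erase u else S.erase v with hS'
  have hsub : S' ⊆ S := by
    rw [hS']; split_ifs <;> exact Finset.erase_subset _ _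
  have hu' : u ∉ S' := by
    rw [hS']; split_ifs with h
    · exact Finset.notMem_erase _ _
    · exact fun hc => h (Finset.erase_subset _ _ hc)
  intro a b c ha hb hc hab hac hbc p hp hlen
  replace ha : a ∈ S' := ha
  replace hb : b ∈ S' := hb
  replace hc : c ∈ S' := hc
  intro hcsupp
  have hd2 : G.dist a b ≤ 2 := by
    rw [← hdiam]; exact dist_le_diam (ediam_ne_top_of_diam_ne_zero (by omega))
  cases p with
  | nil => exact hab rfl
  | cons h1 w1 =>
    cases w1 with
    | nil =>
      simp only [Walk.support_cons, Walk.support_nil, List.mem_cons, List.mem_singleton] at hcsupp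
      rcases hcsupp with h | h | h
      · exact hac h.symm
      · exact hbc h.symm
      · simp at h
    | cons h2 w2 =>
      cases w2 with
      | cons h3 w3 =>
        simp only [Walk.length_cons] at hlen
        omega
      | nil =>
        rename_i x
        have hcx : c = x := by
          simp only [Walk.support_cons, Walk.support_nil, List.mem_cons,
            List.mem_singleton] at hcsupp
          rcases hcsupp with h | h | h | h
          · exact absurd h.symm hac
          · exact h
          · exact absurd h.symm hbc
          · simp at h
        subst hcx
        -- h1 : G.Adj a c, h2 : G.Adj c b, and this is a geodesic of length 2
        simp only [Walk.length_cons, Walk.length_nil] at hlen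
        have hkey : s(a, c) = s(u, v) ∨ s(c, b) = s(u, v) := by
          by_contra hne
          push_neg at hne
          have hle : G.dist a b ≤ H.dist a b :=
            dist_le_dist_deleteEdges G _ (hconn.preconnected a b)
          let q : H.Walk a b :=
            Walk.cons (deleteEdges_adj.mpr ⟨h1, by simpa using hne.1⟩)
              (Walk.cons (deleteEdges_adj.mpr ⟨h2, by simpa using hne.2⟩) Walk.nil)
          have hq2 : q.length = 2 := by simp [q]
          have hdH : H.dist a b = 2 := le_antisymm (hq2 ▸ dist_le q) (by omega)
          have hqp : q.IsPath := Walk.isPath_of_length_eq_dist _ (by rw [hq2, hdH])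
          have := hS (Finset.mem_coe.mpr (hsub ha)) (Finset.mem_coe.mpr (hsub hb))
            (Finset.mem_coe.mpr (hsub hc)) hab hac hbc q hqp (by rw [hq2, hdH])
          simp [q] at this
        -- the deleted edge's endpoints are not in S'
        rcases hkey with h | h <;> rw [Sym2.eq_iff] at h <;>
          rcases h with ⟨h1', h2'⟩ | ⟨h1', h2'⟩
        · exact hu' (h1' ▸ ha)
        · -- a = v, c = u
          exact hu' (h2' ▸ hc)
        · -- c = u
          exact hu' (h1' ▸ hc)
        · -- c = v, b = u
          exact hu' (h2' ▸ hb)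

end Main

/-- If `G` is a finite connected graph of diameter 2 and
`e = uv` is an edge of `G` such that `G - e` is connected, then
`gp(G) - 1 ≤ gp(G - e) ≤ gp(G) + 1`. -/
theorem stmt_16 {V : Type*} [Fintype V] [DecidableEq V] (G : SimpleGraph V)
    (hG : G.Connected) (hdiam : G.diam = 2) (u v : V) (huv : G.Adj u v)
    (hconn : (G.deleteEdges {s(u, v)}).Connected) :
    gpNum G - 1 ≤ gpNum (G.deleteEdges {s(u, v)}) ∧
    gpNum (G.deleteEdges {s(u, v)}) ≤ gpNum G + 1 := by
  have hbdd : ∀ K : SimpleGraph V, BddAbove {n : ℕ | ∃ S : Finset V, IsGPSet K ↑S ∧ S.card = n} :=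
    fun K => ⟨Fintype.card V, fun n ⟨S, _, hc⟩ => hc ▸ S.card_le_univ⟩
  have hne : ∀ K : SimpleGraph V, ({n : ℕ | ∃ S : Finset V, IsGPSet K ↑S ∧ S.card = n}).Nonempty :=
    fun K => ⟨0, ∅, fun a b c ha => by simp at ha, rfl⟩
  have key : ∀ K₁ K₂ : SimpleGraph V,
      (∀ S : Finset V, IsGPSet K₁ ↑S →
        IsGPSet K₂ ↑(if u ∈ S then S.erase u else S.erase v)) →
      gpNum K₁ ≤ gpNum K₂ + 1 := by
    intro K₁ K₂ hmap
    refine csSup_le (hne K₁) ?_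
    rintro n ⟨S, hS, rfl⟩
    have h3 : (if u ∈ S then S.erase u else S.erase v).card ≤ gpNum K₂ :=
      le_csSup (hbdd K₂) ⟨_, hmap S hS, rfl⟩
    have h2 : S.card - 1 ≤ (if u ∈ S then S.erase u else S.erase v).card := by
      split_ifs <;> exact Finset.pred_card_le_card_erase
    omega
  constructor
  · have := key G (G.deleteEdges {s(u, v)}) (fun S hS => gp_to_del G hG hdiam u v huv hconn S hS)
    omega
  · exact key (G.deleteEdges {s(u, v)}) G (fun S hS => gp_of_del G hG hdiam u v huv hconn S hS)
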